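/- Distance to the null sphere: for every integrable positive measure μ on X, sup_{v ∈ S²} |S(μ)(v)| = √2 · pers(μ); i.e., the uniform distance between S(μ) and the zero function equals √2 times the total persistence of μ. -/

import Mathlib

open MeasureTheory

/-- The inner product of `ℝ³ = ℝ × ℝ × ℝ`. -/
noncomputable def inner3 (v a : ℝ × ℝ × ℝ) : ℝ :=
  v.1 * a.1 + v.2.1 * a.2.1 + v.2.2 * a.2.2

/-- The lift of a planar point: `(1, p) ∈ ℝ³`. -/
def lift (p : ℝ × ℝ) : ℝ × ℝ × ℝ := (1, p.1, p.2)

/-- The diagonal projection `π_Δ(x,y) = ((x+y)/2, (x+y)/2)`. -/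
noncomputable def piD (p : ℝ × ℝ) : ℝ × ℝ := ((p.1 + p.2) / 2, (p.1 + p.2) / 2)

/-- The persistence `pers(p) = (y−x)/2`. -/
noncomputable def pers (p : ℝ × ℝ) : ℝ := (p.2 - p.1) / 2

/-- The Euclidean norm of a point of `ℝ²`. -/
noncomputable def enorm2 (p : ℝ × ℝ) : ℝ := Real.sqrt (p.1 ^ 2 + p.2 ^ 2)

/-- The persistence sphere of `μ` evaluated at `v`. -/
noncomputable def PSph (μ : Measure (ℝ × ℝ)) (v : ℝ × ℝ × ℝ) : ℝ :=
  ∫ p, (max 0 (inner3 v (lift p)) - max 0 (inner3 v (lift (piD p)))) ∂μ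

/-- The unit sphere of `ℝ³` as a subtype. -/
def Sph2 : Type := {v : ℝ × ℝ × ℝ // v.1 ^ 2 + v.2.1 ^ 2 + v.2.2 ^ 2 = 1}

noncomputable def vpers : ℝ × ℝ × ℝ := (0, -(Real.sqrt 2)⁻¹, (Real.sqrt 2)⁻¹)

lemma vpers_mem : vpers.1 ^ 2 + vpers.2.1 ^ 2 + vpers.2.2 ^ 2 = 1 := by
  have h : Real.sqrt 2 ^ 2 = 2 := Real.sq_sqrt (by norm_num)
  have h2 : Real.sqrt 2 ≠ 0 := by positivity
  simp [vpers, inv_pow, h]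
  norm_num

lemma inner3_diff (v : ℝ × ℝ × ℝ) (p : ℝ × ℝ) :
    inner3 v (lift p) - inner3 v (lift (piD p)) = (v.2.2 - v.2.1) * pers p := by
  simp only [inner3, lift, piD, pers]; ring

lemma f_bound (v : ℝ × ℝ × ℝ) (hv : v.1 ^ 2 + v.2.1 ^ 2 + v.2.2 ^ 2 = 1) (p : ℝ × ℝ) :
    |max 0 (inner3 v (lift p)) - max 0 (inner3 v (lift (piD p)))| ≤ Real.sqrt 2 * |pers p| := by
  have h1 : |max 0 (inner3 v (lift p)) - max 0 (inner3 v (lift (piD p)))|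
      ≤ |inner3 v (lift p) - inner3 v (lift (piD p))| := by
    simpa [max_comm] using abs_max_sub_max_le_abs (inner3 v (lift p)) (inner3 v (lift (piD p))) 0
  rw [inner3_diff, abs_mul] at h1
  refine h1.trans (mul_le_mul_of_nonneg_right ?_ (abs_nonneg _))
  have h : Real.sqrt 2 ^ 2 = 2 := Real.sq_sqrt (by norm_num)
  have h2 : (0:ℝ) ≤ Real.sqrt 2 := Real.sqrt_nonneg 2
  have hsq2 : (v.2.2 - v.2.1) ^ 2 ≤ 2 := by nlinarith [sq_nonneg (v.2.1 + v.2.2), sq_nonneg v.1]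
  calc |v.2.2 - v.2.1| = Real.sqrt ((v.2.2 - v.2.1) ^ 2) := (Real.sqrt_sq_eq_abs _).symm
    _ ≤ Real.sqrt 2 := Real.sqrt_le_sqrt hsq2

lemma pers_le_enorm2 (p : ℝ × ℝ) : |pers p| ≤ enorm2 p := by
  have h0 : (0:ℝ) ≤ p.1 ^ 2 + p.2 ^ 2 := by positivity
  have h : Real.sqrt (p.1 ^ 2 + p.2 ^ 2) ^ 2 = p.1 ^ 2 + p.2 ^ 2 := Real.sq_sqrt h0
  have hs : (0:ℝ) ≤ Real.sqrt (p.1 ^ 2 + p.2 ^ 2) := Real.sqrt_nonneg _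
  simp only [pers, enorm2]
  rw [abs_div, abs_two]
  rw [div_le_iff₀ (by norm_num : (0:ℝ) < 2)]
  have hsq2 : (p.2 - p.1) ^ 2 ≤ (Real.sqrt (p.1 ^ 2 + p.2 ^ 2) * 2) ^ 2 := by
    nlinarith [sq_nonneg (p.1 + p.2)]
  calc |p.2 - p.1| = Real.sqrt ((p.2 - p.1) ^ 2) := (Real.sqrt_sq_eq_abs _).symm
    _ ≤ Real.sqrt ((Real.sqrt (p.1 ^ 2 + p.2 ^ 2) * 2) ^ 2) := Real.sqrt_le_sqrt hsq2
    _ = Real.sqrt (p.1 ^ 2 + p.2 ^ 2) * 2 := Real.sqrt_sq (by positivity)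

/-- Distance to the null sphere: for every integrable positive measure `μ` on `X`,
`sup_{v ∈ S²} |S(μ)(v)| = √2 · pers(μ)`. -/
theorem uniform_distance_to_null_sphere
    (μ : Measure (ℝ × ℝ)) (hμfin : IsFiniteMeasure μ)
    (hμX : μ {p : ℝ × ℝ | ¬ p.1 < p.2} = 0)
    (hμint : Integrable enorm2 μ) :
    (⨆ v : Sph2, |PSph μ v.1|) = Real.sqrt 2 * ∫ p, pers p ∂μ := by
  have hae : ∀ᵐ p ∂μ, p.1 < p.2 := by
    rw [ae_iff]; simpa using hμX
  have hpers_cont : Continuous pers := by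
    unfold pers; fun_prop
  have hpers_int : Integrable pers μ :=
    hμint.mono hpers_cont.aestronglyMeasurable
      (Filter.Eventually.of_forall fun p => by
        simpa [Real.norm_eq_abs, abs_of_nonneg (Real.sqrt_nonneg _), enorm2] using pers_le_enorm2 p)
  have hpers_nn : ∀ᵐ p ∂μ, 0 ≤ pers p :=
    hae.mono fun p hp => by simp only [pers]; linarith
  have habs_eq : ∫ p, |pers p| ∂μ = ∫ p, pers p ∂μ :=
    integral_congr_ae (hpers_nn.mono fun p hp => abs_of_nonneg hp)
  have hint_nn : 0 ≤ ∫ p, pers p ∂μ := integral_nonneg_of_ae hpers_nn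
  -- upper bound
  have hub : ∀ v : ℝ × ℝ × ℝ, v.1 ^ 2 + v.2.1 ^ 2 + v.2.2 ^ 2 = 1 →
      |PSph μ v| ≤ Real.sqrt 2 * ∫ p, pers p ∂μ := by
    intro v hv
    have h1 : |PSph μ v| ≤ ∫ p, |max 0 (inner3 v (lift p)) - max 0 (inner3 v (lift (piD p)))| ∂μ := by
      simpa [Real.norm_eq_abs, PSph] using
        norm_integral_le_integral_norm (μ := μ)
          (f := fun p => max 0 (inner3 v (lift p)) - max 0 (inner3 v (lift (piD p))))
    refine h1.trans ?_
    have h2 : ∫ p, |max 0 (inner3 v (lift p)) - max 0 (inner3 v (lift (piD p)))| ∂μ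
        ≤ ∫ p, Real.sqrt 2 * |pers p| ∂μ := by
      refine integral_mono_of_nonneg (Filter.Eventually.of_forall fun p => abs_nonneg _)
        ((hpers_int.abs).const_mul _) (Filter.Eventually.of_forall fun p => f_bound v hv p)
    refine h2.trans_eq ?_
    rw [integral_const_mul, habs_eq]
  -- value at vpers
  have h2ne : Real.sqrt 2 ≠ 0 := by positivity
  have hsq : Real.sqrt 2 * Real.sqrt 2 = 2 := Real.mul_self_sqrt (by norm_num)
  have hval : PSph μ vpers = Real.sqrt 2 * ∫ p, pers p ∂μ := by
    have heq : ∀ᵐ p ∂μ,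
        max 0 (inner3 vpers (lift p)) - max 0 (inner3 vpers (lift (piD p)))
          = Real.sqrt 2 * pers p := by
      refine hpers_nn.mono fun p hp => ?_
      have e1 : inner3 vpers (lift p) = Real.sqrt 2 * pers p := by
        have hinv : (Real.sqrt 2)⁻¹ = Real.sqrt 2 / 2 := by
          field_simp
          rw [Real.sq_sqrt (by norm_num : (0:ℝ) ≤ 2)]
        simp only [inner3, lift, vpers, pers, hinv]
        ring
      have e2 : inner3 vpers (lift (piD p)) = 0 := by
        simp only [inner3, lift, piD, vpers]
        ring
      rw [e1, e2, max_self, sub_zero, max_eq_right (by positivity)]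
    rw [PSph, integral_congr_ae heq, integral_const_mul]
  haveI : Nonempty Sph2 := ⟨⟨vpers, vpers_mem⟩⟩
  apply le_antisymm
  · exact ciSup_le fun v => hub v.1 v.2
  · have hB : BddAbove (Set.range fun v : Sph2 => |PSph μ v.1|) :=
      ⟨Real.sqrt 2 * ∫ p, pers p ∂μ, by rintro _ ⟨v, rfl⟩; exact hub v.1 v.2⟩
    calc Real.sqrt 2 * ∫ p, pers p ∂μ = |PSph μ vpers| := by
          rw [hval, abs_of_nonneg (by positivity)]
      _ ≤ ⨆ v : Sph2, |PSph μ v.1| := le_ciSup hB ⟨vpers, vpers_mem⟩
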